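/- Let Y be a Banach space, Z ⊆ Y a closed subspace, C ≥ 1, and suppose W ⊆ L_∞([0,1], Z) (with Lebesgue measure) is a finite-dimensional subspace such that ‖w‖_{L_∞} ≤ C ‖w‖_{L_1} for all w ∈ W. Let W₀ be the subspace of functions in L_∞([0,1], Z) that are a.e. constant on [0,1/2) and a.e. constant on [1/2,1], and suppose W = W₀ ∩ (span of functions valued in Z). If Y has the property that for some function f : [1,∞) → [1,∞), every such W embeds into Y with distortion at most f(C), then Z ⊕_∞ Z embeds into Y with distortion at most 2 f(2). -/

import Mathlib

open MeasureTheory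
open scoped ENNReal

noncomputable section Stmt10Aux

namespace Stmt10

def μ01 : Measure ℝ := volume.restrict (Set.Icc (0:ℝ) 1)

def s1 : Set ℝ := Set.Ico (0:ℝ) (1/2)
def s2 : Set ℝ := Set.Icc (1/2:ℝ) 1

lemma hs1 : MeasurableSet s1 := measurableSet_Ico
lemma hs2 : MeasurableSet s2 := measurableSet_Icc

lemma s1_disj_s2 {x : ℝ} (h : x ∈ s1) : x ∉ s2 := fun h2 => absurd h.2 (not_lt.2 h2.1)

lemma s1_sub : s1 ⊆ Set.Icc (0:ℝ) 1 := by
  rw [s1]; intro x hx; exact ⟨hx.1, hx.2.le.trans (by norm_num)⟩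

lemma s2_sub : s2 ⊆ Set.Icc (0:ℝ) 1 := by
  rw [s2]; intro x hx; exact ⟨le_trans (by norm_num) hx.1, hx.2⟩

lemma μs1 : μ01 s1 = ENNReal.ofReal (1/2) := by
  rw [μ01, Measure.restrict_apply hs1, Set.inter_eq_left.2 s1_sub, s1, Real.volume_Ico]
  norm_num

lemma μs2 : μ01 s2 = ENNReal.ofReal (1/2) := by
  rw [μ01, Measure.restrict_apply hs2, Set.inter_eq_left.2 s2_sub, s2, Real.volume_Icc]
  norm_num

lemma μs1_ne_top : μ01 s1 ≠ ∞ := by rw [μs1]; exact ENNReal.ofReal_ne_top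
lemma μs2_ne_top : μ01 s2 ≠ ∞ := by rw [μs2]; exact ENNReal.ofReal_ne_top
lemma μs1_ne_zero : μ01 s1 ≠ 0 := by rw [μs1]; positivity
lemma μs2_ne_zero : μ01 s2 ≠ 0 := by rw [μs2]; positivity

variable {E : Type*} [NormedAddCommGroup E] [NormedSpace ℝ E]

lemma indicatorConstLp_smul' {α : Type*} [MeasurableSpace α] {μ : Measure α} {s : Set α}
    (hs : MeasurableSet s) (hμs : μ s ≠ ∞) (p : ℝ≥0∞) (r : ℝ) (c : E) :
    indicatorConstLp p hs hμs (r • c) = r • indicatorConstLp p hs hμs c := by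
  refine Lp.ext ?_
  filter_upwards [indicatorConstLp_coeFn (p := p) (hs := hs) (hμs := hμs) (c := r • c),
    Lp.coeFn_smul r (indicatorConstLp p hs hμs c),
    indicatorConstLp_coeFn (p := p) (hs := hs) (hμs := hμs) (c := c)] with x h1 h2 h3
  rw [h1, h2, Pi.smul_apply, h3]
  by_cases hx : x ∈ s <;> simp [Set.indicator, hx]

/-- the "step function" map `(z₁, z₂) ↦ z₁ on [0,1/2), z₂ on [1/2,1]`. -/
def Φ : (E × E) →ₗ[ℝ] Lp E ∞ μ01 where
  toFun z := indicatorConstLp ∞ hs1 μs1_ne_top z.1 + indicatorConstLp ∞ hs2 μs2_ne_top z.2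
  map_add' a b := by
    simp only [Prod.fst_add, Prod.snd_add, ← indicatorConstLp_add]
    abel
  map_smul' r a := by
    simp only [Prod.smul_fst, Prod.smul_snd, indicatorConstLp_smul', RingHom.id_apply,
      smul_add]

def gfun (z : E × E) : ℝ → E :=
  fun x => s1.indicator (fun _ => z.1) x + s2.indicator (fun _ => z.2) x

lemma Φ_coeFn (z : E × E) : ⇑(Φ z) =ᵐ[μ01] gfun z := by
  filter_upwards [Lp.coeFn_add (indicatorConstLp ∞ hs1 μs1_ne_top z.1)
      (indicatorConstLp ∞ hs2 μs2_ne_top z.2),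
    indicatorConstLp_coeFn (p := ∞) (hs := hs1) (hμs := μs1_ne_top) (c := z.1),
    indicatorConstLp_coeFn (p := ∞) (hs := hs2) (hμs := μs2_ne_top) (c := z.2)]
    with x h1 h2 h3
  rw [Φ]
  simp only [LinearMap.coe_mk, AddHom.coe_mk]
  rw [h1, Pi.add_apply, h2, h3, gfun]

lemma gfun_on_s1 (z : E × E) {x : ℝ} (hx : x ∈ s1) : gfun z x = z.1 := by
  rw [gfun, Set.indicator_of_mem hx, Set.indicator_of_notMem (s1_disj_s2 hx), add_zero]

lemma gfun_on_s2 (z : E × E) {x : ℝ} (hx : x ∈ s2) : gfun z x = z.2 := by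
  have hx1 : x ∉ s1 := fun h => s1_disj_s2 h hx
  rw [gfun, Set.indicator_of_notMem hx1, Set.indicator_of_mem hx, zero_add]

lemma gfun_bound (z : E × E) (x : ℝ) : ‖gfun z x‖ ≤ max ‖z.1‖ ‖z.2‖ := by
  by_cases h1 : x ∈ s1
  · rw [gfun_on_s1 z h1]; exact le_max_left _ _
  by_cases h2 : x ∈ s2
  · rw [gfun_on_s2 z h2]; exact le_max_right _ _
  · rw [gfun, Set.indicator_of_notMem h1, Set.indicator_of_notMem h2, add_zero, norm_zero]
    exact le_max_of_le_left (norm_nonneg _)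

lemma eLpNorm_top_le (z : E × E) :
    eLpNorm (gfun z) ∞ μ01 ≤ ENNReal.ofReal (max ‖z.1‖ ‖z.2‖) := by
  rw [eLpNorm_exponent_top]
  exact eLpNormEssSup_le_of_ae_bound (ae_of_all _ (gfun_bound z))

lemma restrict_ne_zero {s : Set ℝ} (h : μ01 s ≠ 0) : μ01.restrict s ≠ 0 := by
  intro hc
  exact h (by rw [← Measure.restrict_apply_univ, hc]; simp)

lemma eLpNorm_restrict_s1 (z : E × E) (p : ℝ≥0∞) (hp : p ≠ 0) :
    eLpNorm (gfun z) p (μ01.restrict s1) =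
      (‖z.1‖₊ : ℝ≥0∞) * (μ01 s1) ^ (1 / p.toReal) := by
  rw [eLpNorm_congr_ae ((ae_restrict_iff' hs1).2 (ae_of_all _ fun x hx => gfun_on_s1 z hx)),
    eLpNorm_const _ hp (restrict_ne_zero μs1_ne_zero), Measure.restrict_apply_univ, enorm_eq_nnnorm]

lemma eLpNorm_restrict_s2 (z : E × E) (p : ℝ≥0∞) (hp : p ≠ 0) :
    eLpNorm (gfun z) p (μ01.restrict s2) =
      (‖z.2‖₊ : ℝ≥0∞) * (μ01 s2) ^ (1 / p.toReal) := by
  rw [eLpNorm_congr_ae ((ae_restrict_iff' hs2).2 (ae_of_all _ fun x hx => gfun_on_s2 z hx)),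
    eLpNorm_const _ hp (restrict_ne_zero μs2_ne_zero), Measure.restrict_apply_univ, enorm_eq_nnnorm]

lemma eLpNorm_top_ge_fst (z : E × E) :
    ENNReal.ofReal ‖z.1‖ ≤ eLpNorm (gfun z) ∞ μ01 := by
  have h := eLpNorm_mono_measure (p := ∞) (gfun z) (Measure.restrict_le_self (μ := μ01) (s := s1))
  have e : eLpNorm (gfun z) ∞ (μ01.restrict s1) = ENNReal.ofReal ‖z.1‖ := by
    rw [eLpNorm_restrict_s1 z ∞ (by simp)]
    simp [ofReal_norm_eq_enorm, enorm_eq_nnnorm]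
  rw [← e]; exact h

lemma eLpNorm_top_ge_snd (z : E × E) :
    ENNReal.ofReal ‖z.2‖ ≤ eLpNorm (gfun z) ∞ μ01 := by
  have h := eLpNorm_mono_measure (p := ∞) (gfun z) (Measure.restrict_le_self (μ := μ01) (s := s2))
  have e : eLpNorm (gfun z) ∞ (μ01.restrict s2) = ENNReal.ofReal ‖z.2‖ := by
    rw [eLpNorm_restrict_s2 z ∞ (by simp)]
    simp [ofReal_norm_eq_enorm, enorm_eq_nnnorm]
  rw [← e]; exact h

lemma eLpNorm_one_ge_fst (z : E × E) :
    ENNReal.ofReal ‖z.1‖ * ENNReal.ofReal (1/2) ≤ eLpNorm (gfun z) 1 μ01 := by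
  have h := eLpNorm_mono_measure (p := 1) (gfun z) (Measure.restrict_le_self (μ := μ01) (s := s1))
  refine le_trans (le_of_eq ?_) h
  rw [eLpNorm_restrict_s1 z 1 one_ne_zero, μs1]
  simp [ofReal_norm_eq_enorm, enorm_eq_nnnorm]

lemma eLpNorm_one_ge_snd (z : E × E) :
    ENNReal.ofReal ‖z.2‖ * ENNReal.ofReal (1/2) ≤ eLpNorm (gfun z) 1 μ01 := by
  have h := eLpNorm_mono_measure (p := 1) (gfun z) (Measure.restrict_le_self (μ := μ01) (s := s2))
  refine le_trans (le_of_eq ?_) h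
  rw [eLpNorm_restrict_s2 z 1 one_ne_zero, μs2]
  simp [ofReal_norm_eq_enorm, enorm_eq_nnnorm]

end Stmt10

end Stmt10Aux

open MeasureTheory
open scoped ENNReal

/-- Proposition 2.2 (contrapositive form): if every finite-dimensional subspace
`W ⊆ L_∞([0,1], Z)` satisfying `‖w‖_∞ ≤ C ‖w‖_1` embeds into `Y` with distortion
at most `f C` — in particular the subspace `W₀` of functions a.e. constant on the two
halves of `[0,1]`, which satisfies this with `C = 2` — then `Z ⊕_∞ Z` (i.e. `Z × Z`
with the max norm) embeds into `Y` with distortion at most `2 f 2`. -/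
theorem stmt_10 (Y : Type*) [NormedAddCommGroup Y] [NormedSpace ℝ Y] [CompleteSpace Y]
    (Z : Submodule ℝ Y) (hZ : IsClosed (Z : Set Y)) [FiniteDimensional ℝ Z]
    (f : ℝ → ℝ) (hf : ∀ t, 1 ≤ f t)
    (hY : ∀ C : ℝ, 1 ≤ C →
      ∀ W : Submodule ℝ (Lp Z ∞ (volume.restrict (Set.Icc (0:ℝ) 1))),
        FiniteDimensional ℝ W →
        (∀ w ∈ W, eLpNorm (w : ℝ → Z) ∞ (volume.restrict (Set.Icc (0:ℝ) 1)) ≤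
          ENNReal.ofReal C * eLpNorm (w : ℝ → Z) 1 (volume.restrict (Set.Icc (0:ℝ) 1))) →
        ∃ (T : W →ₗ[ℝ] Y) (r : ℝ), 0 < r ∧
          ∀ w : W, r * ‖w‖ ≤ ‖T w‖ ∧ ‖T w‖ ≤ r * f C * ‖w‖) :
    ∃ (T : (Z × Z) →ₗ[ℝ] Y) (r : ℝ), 0 < r ∧
      ∀ z : Z × Z, r * ‖z‖ ≤ ‖T z‖ ∧ ‖T z‖ ≤ r * (2 * f 2) * ‖z‖ := by
  classical
  have hμ : volume.restrict (Set.Icc (0:ℝ) 1) = Stmt10.μ01 := rfl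
  set W : Submodule ℝ (Lp Z ∞ (volume.restrict (Set.Icc (0:ℝ) 1))) :=
    LinearMap.range (Stmt10.Φ (E := Z)) with hW
  have instW : FiniteDimensional ℝ W := LinearMap.finiteDimensional_range (Stmt10.Φ (E := Z))
  have cond : ∀ w ∈ W, eLpNorm (w : ℝ → Z) ∞ (volume.restrict (Set.Icc (0:ℝ) 1)) ≤
      ENNReal.ofReal 2 * eLpNorm (w : ℝ → Z) 1 (volume.restrict (Set.Icc (0:ℝ) 1)) := by
    intro w hw
    obtain ⟨z, rfl⟩ := hw
    show eLpNorm (⇑(Stmt10.Φ z) : ℝ → Z) ∞ Stmt10.μ01 ≤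
      ENNReal.ofReal 2 * eLpNorm (⇑(Stmt10.Φ z) : ℝ → Z) 1 Stmt10.μ01
    rw [eLpNorm_congr_ae (Stmt10.Φ_coeFn z), eLpNorm_congr_ae (Stmt10.Φ_coeFn z)]
    refine le_trans (Stmt10.eLpNorm_top_le z) ?_
    have key : ∀ a : ℝ, 0 ≤ a →
        ENNReal.ofReal a * ENNReal.ofReal (1/2) ≤ eLpNorm (Stmt10.gfun z) 1 Stmt10.μ01 →
        ENNReal.ofReal a ≤ ENNReal.ofReal 2 * eLpNorm (Stmt10.gfun z) 1 Stmt10.μ01 := by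
      intro a ha h
      calc ENNReal.ofReal a = ENNReal.ofReal (2 * (a * (1/2))) := by rw [show (2:ℝ) * (a * (1/2)) = a by ring]
        _ = ENNReal.ofReal 2 * ENNReal.ofReal (a * (1/2)) := ENNReal.ofReal_mul (by norm_num)
        _ = ENNReal.ofReal 2 * (ENNReal.ofReal a * ENNReal.ofReal (1/2)) := by
            rw [ENNReal.ofReal_mul ha]
        _ ≤ _ := mul_le_mul_right h _
    rcases max_cases ‖z.1‖ ‖z.2‖ with ⟨h, _⟩ | ⟨h, _⟩ <;> rw [h]
    · exact key _ (norm_nonneg _) (Stmt10.eLpNorm_one_ge_fst z)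
    · exact key _ (norm_nonneg _) (Stmt10.eLpNorm_one_ge_snd z)
  obtain ⟨T, r, hr, hT⟩ := hY 2 one_le_two W instW cond
  refine ⟨T.comp ((Stmt10.Φ (E := Z)).rangeRestrict), r, hr, fun z => ?_⟩
  obtain ⟨h1, h2⟩ := hT ((Stmt10.Φ (E := Z)).rangeRestrict z)
  have hwz : ‖(Stmt10.Φ (E := Z)).rangeRestrict z‖ = ‖Stmt10.Φ z‖ := rfl
  have hfin : eLpNorm (Stmt10.gfun z) ∞ Stmt10.μ01 ≠ ∞ :=
    (lt_of_le_of_lt (Stmt10.eLpNorm_top_le z) ENNReal.ofReal_lt_top).ne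
  have hnorm : ‖Stmt10.Φ z‖ = (eLpNorm (Stmt10.gfun z) ∞ Stmt10.μ01).toReal := by
    rw [Lp.norm_def, eLpNorm_congr_ae (Stmt10.Φ_coeFn z)]
  have hub : ‖Stmt10.Φ z‖ ≤ ‖z‖ := by
    rw [hnorm, Prod.norm_def]
    exact ENNReal.toReal_le_of_le_ofReal
      (le_max_of_le_left (norm_nonneg _)) (Stmt10.eLpNorm_top_le z)
  have hlb : ‖z‖ ≤ ‖Stmt10.Φ z‖ := by
    have h1' := ENNReal.toReal_mono hfin (Stmt10.eLpNorm_top_ge_fst z)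
    have h2' := ENNReal.toReal_mono hfin (Stmt10.eLpNorm_top_ge_snd z)
    rw [ENNReal.toReal_ofReal (norm_nonneg _)] at h1' h2'
    rw [hnorm, Prod.norm_def]
    exact max_le h1' h2'
  have hrf : 0 ≤ r * f 2 := mul_nonneg hr.le ((zero_le_one.trans (hf 2)))
  change r * ‖Stmt10.Φ z‖ ≤ _ at h1
  change _ ≤ r * f 2 * ‖Stmt10.Φ z‖ at h2
  constructor
  · exact le_trans (mul_le_mul_of_nonneg_left hlb hr.le) h1
  · have t1 : r * f 2 * ‖Stmt10.Φ z‖ ≤ r * f 2 * ‖z‖ :=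
      mul_le_mul_of_nonneg_left hub hrf
    have t2 : r * f 2 * ‖z‖ ≤ r * (2 * f 2) * ‖z‖ := by
      have : r * f 2 ≤ r * (2 * f 2) := by nlinarith [hrf]
      exact mul_le_mul_of_nonneg_right this (norm_nonneg z)
    exact le_trans h2 (le_trans t1 t2)
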